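/- Let V, Q, Q₀ be real Hilbert spaces, i : Q → Q₀ a continuous linear map with ‖i q‖ ≤ ‖q‖ for all q ∈ Q, and B : V → Q₀ a continuous linear map. Let V_h ⊆ V and Q_h ⊆ Q be closed subspaces. Suppose δu : ℝ → V is continuously differentiable with δu(t) ∈ V_h for all t, δp : ℝ → Q is continuous with δp(t) ∈ Q_h for all t, r : ℝ → Q₀ is continuous, and for all t ≥ 0: (i) ⟪δu(t), v_h⟫_V = ⟪B v_h, i(δp(t))⟫_{Q₀} for all v_h ∈ V_h; (ii) ⟪B(δu'(t)), i(q_h)⟫_{Q₀} + ⟪δp(t), q_h⟫_Q = ⟪r(t), i(q_h)⟫_{Q₀} for all q_h ∈ Q_h; (iii) δu(0) = 0. Then for all t ≥ 0: ‖δu(t)‖_V² + ∫₀ᵗ ‖δp(s)‖_Q² ds ≤ ∫₀ᵗ ‖r(s)‖_{Q₀}² ds. -/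

import Mathlib

open scoped RealInnerProductSpace

/-- Discrete energy estimate for the Galerkin error components. With real
Hilbert spaces `V`, `Q`, `Q₀`, an embedding `i : Q → Q₀` with `‖i q‖ ≤ ‖q‖`, a continuous
linear map `B : V → Q₀`, closed subspaces `V_h ⊆ V`, `Q_h ⊆ Q`, and functions
`δu` (C¹, valued in `V_h`), `δp` (continuous, valued in `Q_h`), `r` (continuous) satisfying
the discrete error equations for `t ≥ 0` and `δu(0) = 0`, one has for all `t ≥ 0`:
`‖δu(t)‖² + ∫₀ᵗ ‖δp(s)‖² ds ≤ ∫₀ᵗ ‖r(s)‖² ds`. -/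
theorem stmt_14 {V Q Q₀ : Type*}
    [NormedAddCommGroup V] [InnerProductSpace ℝ V] [CompleteSpace V]
    [NormedAddCommGroup Q] [InnerProductSpace ℝ Q] [CompleteSpace Q]
    [NormedAddCommGroup Q₀] [InnerProductSpace ℝ Q₀] [CompleteSpace Q₀]
    (i : Q →L[ℝ] Q₀) (hi : ∀ q : Q, ‖i q‖ ≤ ‖q‖) (B : V →L[ℝ] Q₀)
    (Vh : Submodule ℝ V) (Qh : Submodule ℝ Q)
    (hVh : IsClosed (Vh : Set V)) (hQh : IsClosed (Qh : Set Q))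
    (δu δu' : ℝ → V) (δp : ℝ → Q) (r : ℝ → Q₀)
    (hδu : ∀ t : ℝ, HasDerivAt δu (δu' t) t) (hδu' : Continuous δu')
    (hδuVh : ∀ t : ℝ, δu t ∈ Vh)
    (hδp : Continuous δp) (hδpQh : ∀ t : ℝ, δp t ∈ Qh)
    (hr : Continuous r)
    (heq1 : ∀ t ≥ (0 : ℝ), ∀ vh ∈ Vh, ⟪δu t, vh⟫ = ⟪B vh, i (δp t)⟫)
    (heq2 : ∀ t ≥ (0 : ℝ), ∀ qh ∈ Qh,
      ⟪B (δu' t), i qh⟫ + ⟪δp t, qh⟫ = ⟪r t, i qh⟫)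
    (h0 : δu 0 = 0) :
    ∀ t ≥ (0 : ℝ),
      ‖δu t‖ ^ 2 + ∫ s in (0 : ℝ)..t, ‖δp s‖ ^ 2 ≤ ∫ s in (0 : ℝ)..t, ‖r s‖ ^ 2 := by

  -- the derivative stays in the closed subspace
  have hδu'Vh : ∀ t : ℝ, δu' t ∈ Vh := by
    intro t
    have hslope : Filter.Tendsto (slope δu t) (nhdsWithin t {t}ᶜ) (nhds (δu' t)) :=
      (hasDerivAt_iff_tendsto_slope).mp (hδu t)
    exact hVh.mem_of_tendsto hslope (Filter.Eventually.of_forall fun x =>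
      Vh.smul_mem _ (Vh.sub_mem (hδuVh x) (hδuVh t)))
  set h : ℝ → ℝ := fun s => ‖δp s‖ ^ 2 - ‖r s‖ ^ 2 with hh
  have hhc : Continuous h := by
    exact ((hδp.norm.pow 2).sub (hr.norm.pow 2))
  set F : ℝ → ℝ := fun t => ⟪δu t, δu t⟫ + ∫ s in (0:ℝ)..t, h s with hF
  have hFd : ∀ t : ℝ, HasDerivAt F (2 * ⟪δu t, δu' t⟫ + h t) t := by
    intro t
    have h1 : HasDerivAt (fun t => ⟪δu t, δu t⟫) (⟪δu t, δu' t⟫ + ⟪δu' t, δu t⟫) t :=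
      (hδu t).inner ℝ (hδu t)
    have h2 : HasDerivAt (fun t => ∫ s in (0:ℝ)..t, h s) (h t) t :=
      intervalIntegral.integral_hasDerivAt_right (hhc.intervalIntegrable 0 t)
        (hhc.stronglyMeasurableAtFilter _ _) hhc.continuousAt
    have := h1.add h2
    refine this.congr_deriv ?_
    rw [real_inner_comm (δu' t) (δu t)]
    ring
  have hderiv_nonpos : ∀ t ≥ (0:ℝ), 2 * ⟪δu t, δu' t⟫ + h t ≤ 0 := by
    intro t ht
    have e1 : ⟪δu t, δu' t⟫ = ⟪B (δu' t), i (δp t)⟫ := heq1 t ht (δu' t) (hδu'Vh t)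
    have e2 : ⟪B (δu' t), i (δp t)⟫ + ⟪δp t, δp t⟫ = ⟪r t, i (δp t)⟫ :=
      heq2 t ht (δp t) (hδpQh t)
    have hcs : ⟪r t, i (δp t)⟫ ≤ ‖r t‖ * ‖δp t‖ :=
      (real_inner_le_norm _ _).trans (by
        exact mul_le_mul_of_nonneg_left (hi (δp t)) (norm_nonneg _))
    have hpp : ⟪δp t, δp t⟫ = ‖δp t‖ ^ 2 := real_inner_self_eq_norm_sq _
    have hamgm : 2 * (‖r t‖ * ‖δp t‖) ≤ ‖r t‖ ^ 2 + ‖δp t‖ ^ 2 := by nlinarith [sq_nonneg (‖r t‖ - ‖δp t‖)]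
    have : 2 * ⟪δu t, δu' t⟫ = 2 * ⟪r t, i (δp t)⟫ - 2 * ‖δp t‖ ^ 2 := by
      rw [e1]; rw [← hpp]; linarith [e2]
    rw [this, hh]
    simp only
    nlinarith [hcs, hamgm]
  have hFanti : AntitoneOn F (Set.Ici (0:ℝ)) := by
    apply antitoneOn_of_deriv_nonpos (convex_Ici 0)
    · exact fun t _ => ((hFd t).continuousAt).continuousWithinAt
    · exact fun t _ => ((hFd t).differentiableAt).differentiableWithinAt
    · intro t ht
      rw [interior_Ici] at ht
      rw [(hFd t).deriv]
      exact hderiv_nonpos t (le_of_lt ht)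
  intro t ht
  have hF0 : F 0 = 0 := by
    simp [hF, h0]
  have hFt : F t ≤ 0 := by
    rw [← hF0]
    exact hFanti (Set.self_mem_Ici) ht ht
  have hsplit : (∫ s in (0:ℝ)..t, h s)
      = (∫ s in (0:ℝ)..t, ‖δp s‖ ^ 2) - ∫ s in (0:ℝ)..t, ‖r s‖ ^ 2 := by
    rw [hh]; exact intervalIntegral.integral_sub ((hδp.norm.pow 2).intervalIntegrable 0 t)
      ((hr.norm.pow 2).intervalIntegrable 0 t)
  have hnn : ⟪δu t, δu t⟫ = ‖δu t‖ ^ 2 := real_inner_self_eq_norm_sq _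
  have : ‖δu t‖ ^ 2 + ((∫ s in (0:ℝ)..t, ‖δp s‖ ^ 2) - ∫ s in (0:ℝ)..t, ‖r s‖ ^ 2) ≤ 0 := by
    rw [← hsplit, ← hnn]; exact hFt
  linarith
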